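/- For complex numbers w₁, w₂ with |w₁| ≤ 1 and |w₂| ≤ 1, we have (1 - Re w₁) + (1 - Re w₂) + 2·√(1 - Re w₁)·√(1 - Re w₂) ≥ 1 - Re(w₁ w₂). -/

import Mathlib

open Complex

theorem pointwise_triangle_ineq (w₁ w₂ : ℂ) (h₁ : ‖w₁‖ ≤ 1) (h₂ : ‖w₂‖ ≤ 1) :
    (1 - w₁.re) + (1 - w₂.re)
      + 2 * Real.sqrt (1 - w₁.re) * Real.sqrt (1 - w₂.re)
      ≥ 1 - (w₁ * w₂).re := by
  have hn1 : w₁.re ^ 2 + w₁.im ^ 2 ≤ 1 := by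
    have := Complex.sq_norm w₁
    have h' : ‖w₁‖ ^ 2 ≤ 1 := by
      have : ‖w₁‖ ≤ 1 := h₁
      nlinarith [norm_nonneg w₁]
    rw [Complex.sq_norm, Complex.normSq_apply] at h'
    nlinarith
  have hn2 : w₂.re ^ 2 + w₂.im ^ 2 ≤ 1 := by
    have h' : ‖w₂‖ ^ 2 ≤ 1 := by
      have : ‖w₂‖ ≤ 1 := h₂
      nlinarith [norm_nonneg w₂]
    rw [Complex.sq_norm, Complex.normSq_apply] at h'
    nlinarith
  have ha1 : w₁.re ≤ 1 := by nlinarith [sq_nonneg w₁.im, sq_nonneg (w₁.re - 1)]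
  have ha2 : w₂.re ≤ 1 := by nlinarith [sq_nonneg w₂.im, sq_nonneg (w₂.re - 1)]
  set s₁ := Real.sqrt (1 - w₁.re) with hs1
  set s₂ := Real.sqrt (1 - w₂.re) with hs2
  have hs1nn : 0 ≤ s₁ := Real.sqrt_nonneg _
  have hs2nn : 0 ≤ s₂ := Real.sqrt_nonneg _
  have hs1sq : s₁ ^ 2 = 1 - w₁.re := Real.sq_sqrt (by linarith)
  have hs2sq : s₂ ^ 2 = 1 - w₂.re := Real.sq_sqrt (by linarith)
  have hb1 : w₁.im ^ 2 ≤ 2 * s₁ ^ 2 := by nlinarith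
  have hb2 : w₂.im ^ 2 ≤ 2 * s₂ ^ 2 := by nlinarith
  have hbb : w₁.im * w₂.im ≤ 2 * s₁ * s₂ := by
    nlinarith [mul_nonneg hs1nn hs2nn, sq_nonneg (w₁.im * w₂.im - 2 * s₁ * s₂),
      sq_nonneg (w₁.im * w₂.im + 2 * s₁ * s₂), mul_le_mul hb1 hb2 (sq_nonneg _) (by positivity)]
  rw [Complex.mul_re]
  nlinarith [mul_nonneg (by linarith : (0:ℝ) ≤ 1 - w₁.re) (by linarith : (0:ℝ) ≤ 1 - w₂.re)]
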